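/- Let d₁, d₂ ≥ 1 be natural numbers and let Q₁, Q₂ : Fin 5 → ℂ[t] be vectors of polynomials with natDegree(Q₁ i) ≤ d₁ and natDegree(Q₂ i) ≤ d₂ for all i. For t₀ ∈ ℂ let M(t₀) denote the 5×4 complex matrix whose four columns are the entrywise evaluations at t₀ of Q₁, Q₂, Q₁' and Q₂' (where ' denotes the derivative). Suppose there exists t* ∈ ℂ such that M(t*) has rank 4, and there exists a finite set T ⊆ ℂ with card(T) ≥ 2(d₁ + d₂) − 4 such that M(t₀) has rank at most 3 for every t₀ ∈ T. Then there exists a nonzero vector λ ∈ ℂ⁵ with Σᵢ λᵢ·(Q₁ i) = 0 and Σᵢ λᵢ·(Q₂ i) = 0 as polynomials. -/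

import Mathlib

open Polynomial

set_option maxRecDepth 8000

/-- Degree bound for the column operation `X·p' − d·p`. -/
private lemma tl_aux_deg {p : Polynomial ℂ} {d : ℕ} (hp : p.natDegree ≤ d) :
    (X * derivative p - C (d : ℂ) * p).natDegree ≤ d - 1 := by
  rw [natDegree_le_iff_coeff_eq_zero]
  intro N hN
  have hN' : d ≤ N := by omega
  obtain ⟨m, rfl⟩ : ∃ m, N = m + 1 := ⟨N - 1, by omega⟩
  rw [coeff_sub, coeff_X_mul, coeff_derivative, coeff_C_mul]
  rcases eq_or_lt_of_le hN' with h | h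
  · subst h
    push_cast
    ring
  · have hz : p.coeff (m + 1) = 0 := coeff_eq_zero_of_natDegree_lt (by omega)
    rw [hz]
    ring

/-- Degree bound for determinants with columnwise degree bounds. -/
private lemma tl_aux_det_deg (N : Matrix (Fin 4) (Fin 4) (Polynomial ℂ)) (b : Fin 4 → ℕ)
    (h : ∀ i j, (N i j).natDegree ≤ b j) : N.det.natDegree ≤ ∑ j, b j := by
  rw [Matrix.det_apply]
  refine natDegree_sum_le_of_forall_le _ _ (fun σ _ => ?_)
  have hprod : (∏ i, N (σ i) i).natDegree ≤ ∑ j, b j :=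
    (natDegree_prod_le _ _).trans (Finset.sum_le_sum fun j _ => h (σ j) j)
  rcases Int.units_eq_one_or (Equiv.Perm.sign σ) with hs | hs <;> rw [hs]
  · simpa using hprod
  · simpa using hprod

/-- Cofactor (Laplace) identity for a `5 × 4` matrix: the cross-product vector of
signed maximal minors annihilates every column. -/
private lemma tl_aux_cofactor {R : Type*} [CommRing R] (A : Matrix (Fin 5) (Fin 4) R)
    (j : Fin 4) :
    ∑ i : Fin 5, (-1 : R) ^ (i : ℕ) * A i j * (A.submatrix i.succAbove id).det = 0 := by
  classical
  set B : Matrix (Fin 5) (Fin 5) R := Matrix.of fun k => Fin.cons (A k j) (A k) with hB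
  have hdet : B.det = 0 := by
    apply Matrix.det_zero_of_column_eq (i := (0 : Fin 5)) (j := j.succ) (Fin.succ_ne_zero j).symm
    intro k
    simp only [hB, Matrix.of_apply, Fin.cons_zero, Fin.cons_succ]
  rw [Matrix.det_succ_column_zero] at hdet
  rw [← hdet]
  refine Finset.sum_congr rfl fun i _ => ?_
  have h1 : B i 0 = A i j := by simp only [hB, Matrix.of_apply, Fin.cons_zero]
  have h2 : B.submatrix i.succAbove Fin.succ = A.submatrix i.succAbove id := by
    ext k l
    simp only [hB, Matrix.submatrix_apply, Matrix.of_apply, Fin.cons_succ, id]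
  rw [h1, h2]

/-- A nonvanishing maximal row-minor forces full rank. -/
private lemma tl_aux_rank_ge (N : Matrix (Fin 5) (Fin 4) ℂ) (r : Fin 4 → Fin 5)
    (h : (N.submatrix r id).det ≠ 0) : 4 ≤ N.rank := by
  have hu : IsUnit (N.submatrix r id) :=
    (Matrix.isUnit_iff_isUnit_det _).2 (isUnit_iff_ne_zero.2 h)
  have h4 : (N.submatrix r id).rank = 4 := by
    simpa using Matrix.rank_of_isUnit _ hu
  have hle : (N.submatrix r id).rank ≤ N.rank := by
    have hsub : (N.submatrix r id).mulVecLin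
        = (LinearMap.funLeft ℂ ℂ r).comp (N.mulVecLin.comp
            (LinearMap.funLeft ℂ ℂ (Equiv.refl (Fin 4)).symm)) := by
      simpa using Matrix.mulVecLin_submatrix r (Equiv.refl (Fin 4)) N
    have hfl : LinearMap.funLeft ℂ ℂ ((Equiv.refl (Fin 4)).symm : Fin 4 → Fin 4)
        = LinearMap.id := by
      ext v k; rfl
    rw [Matrix.rank, Matrix.rank, hsub, hfl, LinearMap.comp_id, LinearMap.range_comp]
    exact Submodule.finrank_map_le _ _
  omega

/-- Full rank forces some maximal row-minor to be nonzero. -/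
private lemma tl_aux_exists_minor (N : Matrix (Fin 5) (Fin 4) ℂ) (h : N.rank = 4) :
    ∃ i : Fin 5, (N.submatrix i.succAbove id).det ≠ 0 := by
  classical
  by_contra hc
  push_neg at hc
  have hker : LinearMap.ker N.mulVecLin = ⊥ := by
    have hrn := LinearMap.finrank_range_add_finrank_ker N.mulVecLin
    have hr : N.rank = Module.finrank ℂ (LinearMap.range N.mulVecLin) := rfl
    have hdom : Module.finrank ℂ (Fin 4 → ℂ) = 4 := by simp
    rw [hdom] at hrn
    exact Submodule.finrank_eq_zero.1 (by omega)
  have hli : LinearIndependent ℂ N.transpose := by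
    refine Fintype.linearIndependent_iff.2 ?_
    intro g hg
    have hmv : N.mulVec g = 0 := by
      funext k
      have := congrFun hg k
      simpa [Matrix.mulVec, dotProduct, Finset.sum_apply, mul_comm] using this
    have : g ∈ LinearMap.ker N.mulVecLin := by
      simpa [Matrix.mulVecLin_apply] using hmv
    rw [hker] at this
    intro i
    exact congrFun (Submodule.mem_bot ℂ |>.1 this) i
  have hspan : Submodule.span ℂ (Set.range N.transpose) ≠ ⊤ := by
    intro htop
    have h1 : Module.finrank ℂ (Submodule.span ℂ (Set.range N.transpose)) = 4 := by
      exact (Matrix.rank_eq_finrank_span_cols N).symm.trans h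
    rw [htop] at h1
    have h2 : Module.finrank ℂ (⊤ : Submodule ℂ (Fin 5 → ℂ)) = 5 := by simp
    omega
  obtain ⟨u, hu⟩ : ∃ u, u ∉ Submodule.span ℂ (Set.range N.transpose) := by
    by_contra h'
    push_neg at h'
    exact hspan (Submodule.eq_top_iff'.mpr h')
  set B : Matrix (Fin 5) (Fin 5) ℂ := Matrix.of fun k => Fin.cons (u k) (N k) with hBdef
  have hBt : B.transpose = Fin.cons u N.transpose := by
    funext l
    refine Fin.cases ?_ (fun m => ?_) l <;> funext k <;> simp [hBdef, Matrix.transpose_apply] <;> rfl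
  have hliB : LinearIndependent ℂ B.transpose := by
    rw [hBt]
    exact linearIndependent_fin_cons.2 ⟨hli, hu⟩
  have hdB : B.det ≠ 0 := by
    intro h0
    obtain ⟨v, hv0, hv⟩ := Matrix.exists_mulVec_eq_zero_iff.2 h0
    have hsum : ∑ l, v l • B.transpose l = 0 := by
      funext k
      have := congrFun hv k
      simpa [Matrix.mulVec, dotProduct, Finset.sum_apply, mul_comm] using this
    exact hv0 (funext fun l => Fintype.linearIndependent_iff.mp hliB v hsum l)
  apply hdB
  rw [Matrix.det_succ_column_zero]
  refine Finset.sum_eq_zero fun i _ => ?_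
  have hsb : B.submatrix i.succAbove Fin.succ = N.submatrix i.succAbove id := by
    ext k l
    simp [hBdef, Matrix.submatrix]
  rw [hsb, hc i, mul_zero]

/-- Column operation: replacing column `js` by `X·(col js) − C a·(col jt)` multiplies the
determinant by `X`. -/
private lemma tl_aux_colop (M : Matrix (Fin 4) (Fin 4) (Polynomial ℂ)) (a : ℂ)
    (js jt : Fin 4) (hne : jt ≠ js) :
    (M.updateCol js (fun k => X * M k js - C a * M k jt)).det = X * M.det := by
  have hfun : (fun k => X * M k js - C a * M k jt)
      = (X : Polynomial ℂ) • (fun k => M k js) + (-C a) • fun k => M k jt := by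
    funext k
    simp only [Pi.add_apply, Pi.smul_apply, smul_eq_mul]
    ring
  rw [hfun, Matrix.det_updateCol_add]
  have h1 : Matrix.det (M.updateCol js ((X : Polynomial ℂ) • fun k => M k js))
      = X * M.det := by
    rw [Matrix.det_updateCol_smul]
    have : (fun k => M k js) = fun k => M k js := rfl
    rw [show (M.updateCol js fun k => M k js) = M from Matrix.updateCol_eq_self M js]
  have h2 : Matrix.det (M.updateCol js ((-C a : Polynomial ℂ) • fun k => M k jt))
      = 0 := by
    rw [Matrix.det_updateCol_smul, Matrix.det_updateCol_eq_zero hne, mul_zero]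
  rw [h1, h2, add_zero]

/-- Coordinate form of the torsal-lines lemma: if the `5 × 4` matrix of evaluations of
`Q₁, Q₂, Q₁', Q₂'` has rank `4` at some point, but rank at most `3` at each of at least
`2(d₁ + d₂) − 4` points, then there is a nonzero linear relation `λ` annihilating both
`Q₁` and `Q₂` identically. -/
theorem stmt_0 (d₁ d₂ : ℕ) (h₁ : 1 ≤ d₁) (h₂ : 1 ≤ d₂)
    (Q₁ Q₂ : Fin 5 → Polynomial ℂ)
    (hQ₁ : ∀ i, (Q₁ i).natDegree ≤ d₁) (hQ₂ : ∀ i, (Q₂ i).natDegree ≤ d₂)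
    (M : ℂ → Matrix (Fin 5) (Fin 4) ℂ)
    (hM : ∀ t₀ : ℂ, M t₀ = Matrix.of fun i =>
      ![(Q₁ i).eval t₀, (Q₂ i).eval t₀,
        ((derivative (Q₁ i))).eval t₀, ((derivative (Q₂ i))).eval t₀])
    (hfull : ∃ tstar : ℂ, (M tstar).rank = 4)
    (T : Finset ℂ) (hTcard : 2 * (d₁ + d₂) - 4 ≤ T.card)
    (hTrank : ∀ t₀ ∈ T, (M t₀).rank ≤ 3) :
    ∃ lam : Fin 5 → ℂ, lam ≠ 0 ∧
      (∑ i, C (lam i) * Q₁ i) = 0 ∧ (∑ i, C (lam i) * Q₂ i) = 0 := by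
  classical
  obtain ⟨tstar, hstar⟩ := hfull
  -- the polynomial matrix
  set A : Matrix (Fin 5) (Fin 4) (Polynomial ℂ) :=
    Matrix.of fun i => ![Q₁ i, Q₂ i, derivative (Q₁ i), derivative (Q₂ i)] with hA
  have hMA : ∀ t : ℂ, M t = A.map (eval t) := by
    intro t
    rw [hM t]
    ext i j
    fin_cases j <;> simp [hA]
  -- maximal minors
  set D : Fin 5 → Polynomial ℂ := fun i => (A.submatrix i.succAbove id).det with hD
  have hevalD : ∀ (t : ℂ) (i : Fin 5),
      eval t (D i) = ((M t).submatrix i.succAbove id).det := by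
    intro t i
    rw [hMA t, hD]
    have : (A.submatrix i.succAbove id).map (eval t)
        = (A.map (eval t)).submatrix i.succAbove id := rfl
    rw [show eval t (A.submatrix i.succAbove id).det
        = ((A.submatrix i.succAbove id).map (eval t)).det from
      (evalRingHom t).map_det _, this]
  -- minors vanish on T
  have hroots : ∀ i : Fin 5, ∀ t ∈ T, eval t (D i) = 0 := by
    intro i t ht
    by_contra hne
    rw [hevalD t i] at hne
    have := tl_aux_rank_ge (M t) i.succAbove hne
    have := hTrank t ht
    omega
  -- degree bound on the minors
  have hdeg : ∀ i : Fin 5, D i ≠ 0 → (D i).natDegree ≤ 2 * (d₁ + d₂) - 4 := by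
    intro i hDne
    set A' : Matrix (Fin 4) (Fin 4) (Polynomial ℂ) := A.submatrix i.succAbove id with hA'
    -- perform the two column operations
    set E₁ : Matrix (Fin 4) (Fin 4) (Polynomial ℂ) :=
      A'.updateCol 2 (fun k => X * A' k 2 - C (d₁ : ℂ) * A' k 0) with hE₁
    set E₂ : Matrix (Fin 4) (Fin 4) (Polynomial ℂ) :=
      E₁.updateCol 3 (fun k => X * E₁ k 3 - C (d₂ : ℂ) * E₁ k 1) with hE₂
    have hdet₂ : E₂.det = X ^ 2 * (D i) := by
      rw [hE₂, tl_aux_colop E₁ (d₂ : ℂ) 3 1 (by decide), hE₁,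
        tl_aux_colop A' (d₁ : ℂ) 2 0 (by decide)]
      have hDA : D i = A'.det := rfl
      rw [hDA]
      ring
    -- entrywise degree bounds for `E₂`
    have hbound : ∀ k j, (E₂ k j).natDegree ≤ (![d₁, d₂, d₁ - 1, d₂ - 1] : Fin 4 → ℕ) j := by
      intro k j
      have e0 : A' k 0 = Q₁ (i.succAbove k) := by simp [hA', hA, Matrix.submatrix]
      have e1 : A' k 1 = Q₂ (i.succAbove k) := by simp [hA', hA, Matrix.submatrix]
      have e2 : A' k 2 = derivative (Q₁ (i.succAbove k)) := by simp [hA', hA, Matrix.submatrix]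
      have e3 : A' k 3 = derivative (Q₂ (i.succAbove k)) := by simp [hA', hA, Matrix.submatrix]
      fin_cases j
      · show (E₂ k 0).natDegree ≤ d₁
        have he : E₂ k 0 = A' k 0 := by
          rw [hE₂, hE₁]
          simp [Matrix.updateCol_apply]
        rw [he, e0]
        exact hQ₁ _
      · show (E₂ k 1).natDegree ≤ d₂
        have he : E₂ k 1 = A' k 1 := by
          rw [hE₂, hE₁]
          simp [Matrix.updateCol_apply]
        rw [he, e1]
        exact hQ₂ _
      · show (E₂ k 2).natDegree ≤ d₁ - 1
        have he : E₂ k 2 = X * A' k 2 - C (d₁ : ℂ) * A' k 0 := by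
          rw [hE₂, hE₁]
          simp [Matrix.updateCol_apply]
        rw [he, e2, e0]
        exact tl_aux_deg (hQ₁ _)
      · show (E₂ k 3).natDegree ≤ d₂ - 1
        have he : E₂ k 3 = X * A' k 3 - C (d₂ : ℂ) * A' k 1 := by
          rw [hE₂, hE₁]
          simp [Matrix.updateCol_apply]
        rw [he, e3, e1]
        exact tl_aux_deg (hQ₂ _)
    have hdegE : E₂.det.natDegree ≤ d₁ + d₂ + (d₁ - 1) + (d₂ - 1) := by
      have := tl_aux_det_deg E₂ ![d₁, d₂, d₁ - 1, d₂ - 1] hbound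
      simpa [Fin.sum_univ_four] using this
    have hX2 : (X ^ 2 * D i).natDegree = 2 + (D i).natDegree := by
      rw [natDegree_mul (pow_ne_zero _ X_ne_zero) hDne, natDegree_X_pow]
    rw [hdet₂, hX2] at hdegE
    omega
  -- the product of linear factors over T
  set P : Polynomial ℂ := ∏ τ ∈ T, (X - C τ) with hP
  have hPne : P ≠ 0 := by
    rw [hP]
    exact Finset.prod_ne_zero_iff.2 fun τ _ => X_sub_C_ne_zero τ
  have hPdeg : P.natDegree = T.card := by
    rw [hP, natDegree_prod _ _ fun τ _ => X_sub_C_ne_zero τ]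
    simp
  -- every minor is a constant multiple of P
  have hstruct : ∀ i : Fin 5, ∃ c : ℂ, D i = C c * P := by
    intro i
    by_cases hDne : D i = 0
    · exact ⟨0, by rw [hDne, map_zero, zero_mul]⟩
    · have hdvd : P ∣ D i := by
        have hTle : T.val ≤ (D i).roots := by
          rw [Multiset.le_iff_subset T.nodup]
          intro τ hτ
          rw [mem_roots hDne]
          exact hroots i τ hτ
        have h1 : (T.val.map fun τ => X - C τ).prod ∣ ((D i).roots.map fun τ => X - C τ).prod :=
          Multiset.prod_dvd_prod_of_le (Multiset.map_le_map hTle)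
        have h2 : (T.val.map fun τ => X - C τ).prod = P := rfl
        rw [h2] at h1
        exact h1.trans (prod_multiset_X_sub_C_dvd (D i))
      obtain ⟨q, hq⟩ := hdvd
      have hqne : q ≠ 0 := by
        intro h0
        rw [h0, mul_zero] at hq
        exact hDne hq
      have hdq : (D i).natDegree = P.natDegree + q.natDegree := by
        rw [hq, natDegree_mul hPne hqne]
      have hq0 : q.natDegree = 0 := by
        have := hdeg i hDne
        omega
      refine ⟨q.coeff 0, ?_⟩
      have hb : q = C (q.coeff 0) := eq_C_of_natDegree_le_zero hq0.le
      conv_lhs => rw [hq, hb]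
      exact mul_comm _ _
    -- choose the constants
  choose c hc using hstruct
  -- a minor that is nonzero at tstar
  obtain ⟨i₀, hi₀⟩ := tl_aux_exists_minor (M tstar) hstar
  have hDi₀ : D i₀ ≠ 0 := by
    intro h0
    apply hi₀
    rw [← hevalD tstar i₀, h0, eval_zero]
  have hci₀ : c i₀ ≠ 0 := by
    intro h0
    apply hDi₀
    rw [hc i₀, h0, map_zero, zero_mul]
  -- define lambda
  refine ⟨fun i => (-1 : ℂ) ^ (i : ℕ) * c i, ?_, ?_, ?_⟩
  · intro h0
    apply hci₀
    have := congrFun h0 i₀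
    simp only [Pi.zero_apply] at this
    have hpow : ((-1 : ℂ) ^ (i₀ : ℕ)) ≠ 0 := by
      apply pow_ne_zero
      norm_num
    exact (mul_eq_zero.1 this).resolve_left hpow
  · -- relation for Q₁ (column 0)
    have hid := tl_aux_cofactor A (0 : Fin 4)
    have hsum : (∑ i : Fin 5, C ((-1 : ℂ) ^ (i : ℕ) * c i) * A i 0) * P = 0 := by
      rw [← hid, Finset.sum_mul]
      refine Finset.sum_congr rfl fun i _ => ?_
      have hDi : (A.submatrix i.succAbove id).det = C (c i) * P := hc i
      rw [hDi]
      simp only [map_mul, map_pow, map_neg, map_one]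
      ring
    have hz := (mul_eq_zero.1 hsum).resolve_right hPne
    show (∑ i : Fin 5, C ((-1 : ℂ) ^ (i : ℕ) * c i) * Q₁ i) = 0
    rw [← hz]
    refine Finset.sum_congr rfl fun i _ => ?_
    have hA0 : A i 0 = Q₁ i := by simp [hA]
    rw [hA0]
  · -- relation for Q₂ (column 1)
    have hid := tl_aux_cofactor A (1 : Fin 4)
    have hsum : (∑ i : Fin 5, C ((-1 : ℂ) ^ (i : ℕ) * c i) * A i 1) * P = 0 := by
      rw [← hid, Finset.sum_mul]
      refine Finset.sum_congr rfl fun i _ => ?_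
      have hDi : (A.submatrix i.succAbove id).det = C (c i) * P := hc i
      rw [hDi]
      simp only [map_mul, map_pow, map_neg, map_one]
      ring
    have hz := (mul_eq_zero.1 hsum).resolve_right hPne
    show (∑ i : Fin 5, C ((-1 : ℂ) ^ (i : ℕ) * c i) * Q₂ i) = 0
    rw [← hz]
    refine Finset.sum_congr rfl fun i _ => ?_
    have hA1 : A i 1 = Q₂ i := by simp [hA]
    rw [hA1]
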